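/- arXiv:2603.07255 — 2 statements merged into one kernel-verified Lean document; each statement's English description precedes it below -/
import Mathlib

section
/- Suppose the family of conditional densities p_x (w.r.t. a σ-finite measure ν on ℝ^m) is differentiable in quadratic mean at x0 with score ℓ̇ satisfying ∫‖ℓ̇(y)‖^2 p_{x0}(y) ν(dy) < ∞. Define D(x) := ∫(√(p_x(y)) - √(p_{x0}(y)))^2 ν(dy) and I(x0) := ∫ ℓ̇(y) ℓ̇(y)^T p_{x0}(y) ν(dy). Then as x → x0, D(x) = (1/4)(x - x0)^T I(x0)(x - x0) + o(‖x - x0‖^2). -/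
set_option maxHeartbeats 1000000


open MeasureTheory Asymptotics Filter

private lemma cauchy_sq {α : Type*} [MeasurableSpace α] {μ : Measure α} {f g : α → ℝ}
    (hf : MemLp f 2 μ) (hg : MemLp g 2 μ) :
    |∫ y, f y * g y ∂μ| ≤ Real.sqrt (∫ y, f y ^ 2 ∂μ) * Real.sqrt (∫ y, g y ^ 2 ∂μ) := by
  have h2 : (2:ℝ).HolderConjugate 2 := Real.holderConjugate_iff.mpr ⟨one_lt_two, by norm_num⟩
  have hf' : MemLp f (ENNReal.ofReal 2) μ := by convert hf using 2; simp
  have hg' : MemLp g (ENNReal.ofReal 2) μ := by convert hg using 2; simp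
  have key := MeasureTheory.integral_mul_norm_le_Lp_mul_Lq h2 hf' hg'
  have e1 : ∫ y, ‖f y‖ ^ (2:ℝ) ∂μ = ∫ y, f y ^ 2 ∂μ :=
    integral_congr_ae (Eventually.of_forall fun y => by
      show ‖f y‖ ^ (2:ℝ) = f y ^ 2
      rw [Real.norm_eq_abs, show (2:ℝ) = ((2:ℕ):ℝ) by norm_num, Real.rpow_natCast, sq_abs])
  have e2 : ∫ y, ‖g y‖ ^ (2:ℝ) ∂μ = ∫ y, g y ^ 2 ∂μ :=
    integral_congr_ae (Eventually.of_forall fun y => by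
      show ‖g y‖ ^ (2:ℝ) = g y ^ 2
      rw [Real.norm_eq_abs, show (2:ℝ) = ((2:ℕ):ℝ) by norm_num, Real.rpow_natCast, sq_abs])
  have e3 : ∀ X : ℝ, X ^ (1/(2:ℝ)) = Real.sqrt X := fun X => (Real.sqrt_eq_rpow X).symm
  calc |∫ y, f y * g y ∂μ| ≤ ∫ y, ‖f y * g y‖ ∂μ := by
        rw [← Real.norm_eq_abs]; exact norm_integral_le_integral_norm _
    _ = ∫ y, ‖f y‖ * ‖g y‖ ∂μ :=
        integral_congr_ae (Eventually.of_forall fun y => by simp [norm_mul])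
    _ ≤ (∫ y, ‖f y‖ ^ (2:ℝ) ∂μ) ^ (1/(2:ℝ)) * (∫ y, ‖g y‖ ^ (2:ℝ) ∂μ) ^ (1/(2:ℝ)) := key
    _ = _ := by rw [e1, e2, e3, e3]

private lemma key_est {α : Type*} [MeasurableSpace α] {μ : Measure α} {u s : α → ℝ}
    (hu : MemLp u 2 μ) (hs : MemLp s 2 μ) :
    |(∫ y, u y ^ 2 ∂μ) - ∫ y, s y ^ 2 ∂μ| ≤
      (∫ y, (u y - s y) ^ 2 ∂μ) +
        2 * (Real.sqrt (∫ y, (u y - s y) ^ 2 ∂μ) * Real.sqrt (∫ y, s y ^ 2 ∂μ)) := by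
  have hr : MemLp (fun y => u y - s y) 2 μ := hu.sub hs
  have Ir : Integrable (fun y => (u y - s y) ^ 2) μ := hr.integrable_sq
  have Is : Integrable (fun y => s y ^ 2) μ := hs.integrable_sq
  have Irs : Integrable (fun y => (u y - s y) * s y) μ := by
    refine Integrable.mono' (Ir.add Is) (hr.1.mul hs.1) (Eventually.of_forall fun y => ?_)
    rw [Real.norm_eq_abs]
    simp only [Pi.add_apply]
    nlinarith [sq_nonneg (|u y - s y| - |s y|), abs_mul (u y - s y) (s y),
      sq_abs (u y - s y), sq_abs (s y), abs_nonneg ((u y - s y) * s y),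
      abs_nonneg (u y - s y), abs_nonneg (s y)]
  have hI : ∫ y, u y ^ 2 ∂μ = (∫ y, (u y - s y) ^ 2 ∂μ) +
      ((2 * ∫ y, (u y - s y) * s y ∂μ) + ∫ y, s y ^ 2 ∂μ) := by
    have i1 := integral_add (μ := μ) (Irs.const_mul 2) Is
    have i2 := integral_add (μ := μ) Ir ((Irs.const_mul 2).add Is)
    simp only [Pi.add_apply] at i1 i2
    calc ∫ y, u y ^ 2 ∂μ
        = ∫ y, ((u y - s y) ^ 2 + (2 * ((u y - s y) * s y) + s y ^ 2)) ∂μ :=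
          integral_congr_ae (Eventually.of_forall fun y => by ring)
      _ = (∫ y, (u y - s y) ^ 2 ∂μ) +
          ((2 * ∫ y, (u y - s y) * s y ∂μ) + ∫ y, s y ^ 2 ∂μ) := by
          rw [i2, i1, integral_const_mul]
  have h0 : 0 ≤ ∫ y, (u y - s y) ^ 2 ∂μ := integral_nonneg fun y => sq_nonneg _
  have hcs := cauchy_sq hr hs
  rw [hI]
  have habs : |(∫ y, (u y - s y) ^ 2 ∂μ) +
      ((2 * ∫ y, (u y - s y) * s y ∂μ) + ∫ y, s y ^ 2 ∂μ) - ∫ y, s y ^ 2 ∂μ| ≤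
      (∫ y, (u y - s y) ^ 2 ∂μ) + 2 * |∫ y, (u y - s y) * s y ∂μ| := by
    rw [show (∫ y, (u y - s y) ^ 2 ∂μ) +
      ((2 * ∫ y, (u y - s y) * s y ∂μ) + ∫ y, s y ^ 2 ∂μ) - ∫ y, s y ^ 2 ∂μ
      = (∫ y, (u y - s y) ^ 2 ∂μ) + 2 * ∫ y, (u y - s y) * s y ∂μ from by ring]
    calc |(∫ y, (u y - s y) ^ 2 ∂μ) + 2 * ∫ y, (u y - s y) * s y ∂μ|
        ≤ |∫ y, (u y - s y) ^ 2 ∂μ| + |2 * ∫ y, (u y - s y) * s y ∂μ| := abs_add_le _ _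
      _ = (∫ y, (u y - s y) ^ 2 ∂μ) + 2 * |∫ y, (u y - s y) * s y ∂μ| := by
          rw [abs_of_nonneg h0, abs_mul, abs_two]
  linarith

theorem stmt_14 (d m : ℕ)
    (ν : Measure (EuclideanSpace ℝ (Fin m))) [SigmaFinite ν]
    (p : EuclideanSpace ℝ (Fin d) → EuclideanSpace ℝ (Fin m) → ℝ)
    (x0 : EuclideanSpace ℝ (Fin d))
    (hp0 : ∀ x y, 0 ≤ p x y) (hpmeas : ∀ x, Measurable (p x))
    (hpdens : ∀ x, ∫ y, p x y ∂ν = 1)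
    (L : EuclideanSpace ℝ (Fin m) → EuclideanSpace ℝ (Fin d)) (hL : Measurable L)
    (hL2 : Integrable (fun y => ‖L y‖ ^ 2 * p x0 y) ν)
    (hQMD : (fun t : EuclideanSpace ℝ (Fin d) =>
        ∫ y, (Real.sqrt (p (x0 + t) y) - Real.sqrt (p x0 y) -
          (1 / 2) * (inner ℝ t (L y) : ℝ) * Real.sqrt (p x0 y)) ^ 2 ∂ν)
        =o[nhds 0] fun t => ‖t‖ ^ 2) :
    (fun x : EuclideanSpace ℝ (Fin d) =>
        (∫ y, (Real.sqrt (p x y) - Real.sqrt (p x0 y)) ^ 2 ∂ν) -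
          (1 / 4) * ∫ y, ((inner ℝ (x - x0) (L y) : ℝ)) ^ 2 * p x0 y ∂ν)
      =o[nhds x0] fun x => ‖x - x0‖ ^ 2 := by
  classical
  obtain ⟨f, hfdef⟩ : ∃ f : EuclideanSpace ℝ (Fin d) → ℝ, f = fun t =>
      ∫ y, (Real.sqrt (p (x0 + t) y) - Real.sqrt (p x0 y) -
        (1 / 2) * (inner ℝ t (L y) : ℝ) * Real.sqrt (p x0 y)) ^ 2 ∂ν := ⟨_, rfl⟩
  have hft : ∀ t, f t = ∫ y, (Real.sqrt (p (x0 + t) y) - Real.sqrt (p x0 y) -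
      (1 / 2) * (inner ℝ t (L y) : ℝ) * Real.sqrt (p x0 y)) ^ 2 ∂ν := fun t => by rw [hfdef]
  rw [← hfdef] at hQMD
  have hpint : ∀ x, Integrable (p x) ν := fun x => integrable_of_integral_eq_one (hpdens x)
  have hqmeas : ∀ x, Measurable (fun y => Real.sqrt (p x y)) := fun x => (hpmeas x).sqrt
  have hq2 : ∀ x, MemLp (fun y => Real.sqrt (p x y)) 2 ν := by
    intro x
    rw [memLp_two_iff_integrable_sq (hqmeas x).aestronglyMeasurable]
    exact (hpint x).congr (Eventually.of_forall fun y => (Real.sq_sqrt (hp0 x y)).symm)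
  have hsmeas : ∀ t : EuclideanSpace ℝ (Fin d),
      Measurable (fun y => (1 / 2) * (inner ℝ t (L y) : ℝ) * Real.sqrt (p x0 y)) := fun t =>
    ((measurable_const.inner hL).const_mul (1/2)).mul (hqmeas x0)
  have hinner_sq : ∀ (t : EuclideanSpace ℝ (Fin d)) y, ((inner ℝ t (L y) : ℝ)) ^ 2 ≤ ‖t‖ ^ 2 * ‖L y‖ ^ 2 := by
    intro t y
    nlinarith [abs_real_inner_le_norm t (L y), abs_nonneg (inner ℝ t (L y) : ℝ),
      sq_abs (inner ℝ t (L y) : ℝ), norm_nonneg t, norm_nonneg (L y)]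
  have hs2 : ∀ t : EuclideanSpace ℝ (Fin d),
      MemLp (fun y => (1 / 2) * (inner ℝ t (L y) : ℝ) * Real.sqrt (p x0 y)) 2 ν := by
    intro t
    rw [memLp_two_iff_integrable_sq (hsmeas t).aestronglyMeasurable]
    refine Integrable.mono' (hL2.const_mul (‖t‖ ^ 2))
      (((hsmeas t).pow_const 2).aestronglyMeasurable) (Eventually.of_forall fun y => ?_)
    rw [Real.norm_eq_abs, abs_of_nonneg (sq_nonneg _)]
    have h1 := hinner_sq t y
    have h2 := Real.sq_sqrt (hp0 x0 y)
    have h3 := hp0 x0 y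
    nlinarith [sq_nonneg (‖t‖ * ‖L y‖), Real.sqrt_nonneg (p x0 y)]
  have hs_sq_eq : ∀ t : EuclideanSpace ℝ (Fin d),
      ∫ y, ((1 / 2) * (inner ℝ t (L y) : ℝ) * Real.sqrt (p x0 y)) ^ 2 ∂ν =
        (1 / 4) * ∫ y, ((inner ℝ t (L y) : ℝ)) ^ 2 * p x0 y ∂ν := by
    intro t
    rw [← integral_const_mul]
    refine integral_congr_ae (Eventually.of_forall fun y => ?_)
    have h2 := Real.sq_sqrt (hp0 x0 y)
    linear_combination ((1:ℝ)/4) * ((inner ℝ t (L y) : ℝ)) ^ 2 * h2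
  obtain ⟨C, hCdef⟩ : ∃ C : ℝ, C = ∫ y, ‖L y‖ ^ 2 * p x0 y ∂ν := ⟨_, rfl⟩
  have hC0 : 0 ≤ C := by
    rw [hCdef]; exact integral_nonneg fun y => mul_nonneg (sq_nonneg _) (hp0 x0 y)
  have hf_nonneg : ∀ t : EuclideanSpace ℝ (Fin d), 0 ≤ f t := fun t => by
    rw [hft]; exact integral_nonneg fun y => sq_nonneg _
  -- bound on the L² norm of the linear term
  have hs_sq_le : ∀ t : EuclideanSpace ℝ (Fin d),
      Real.sqrt ((1 / 4) * ∫ y, ((inner ℝ t (L y) : ℝ)) ^ 2 * p x0 y ∂ν) ≤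
        (1 / 2) * (‖t‖ * Real.sqrt C) := by
    intro t
    have Ii : Integrable (fun y => ((inner ℝ t (L y) : ℝ)) ^ 2 * p x0 y) ν := by
      refine ((hs2 t).integrable_sq.const_mul 4).congr (Eventually.of_forall fun y => ?_)
      have h2 := Real.sq_sqrt (hp0 x0 y)
      linear_combination ((inner ℝ t (L y) : ℝ)) ^ 2 * h2
    have hmono : ∫ y, ((inner ℝ t (L y) : ℝ)) ^ 2 * p x0 y ∂ν ≤ ‖t‖ ^ 2 * C := by
      rw [hCdef, ← integral_const_mul]
      refine integral_mono Ii (hL2.const_mul _) fun y => ?_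
      nlinarith [mul_le_mul_of_nonneg_right (hinner_sq t y) (hp0 x0 y)]
    calc Real.sqrt ((1 / 4) * ∫ y, ((inner ℝ t (L y) : ℝ)) ^ 2 * p x0 y ∂ν)
        ≤ Real.sqrt ((1 / 4) * (‖t‖ ^ 2 * C)) := Real.sqrt_le_sqrt (by linarith)
      _ = (1 / 2) * (‖t‖ * Real.sqrt C) := by
          rw [show (1/4 : ℝ) * (‖t‖ ^ 2 * C) = ((1/2) * (‖t‖ * Real.sqrt C)) ^ 2 from by
            rw [mul_pow, mul_pow, Real.sq_sqrt hC0]; ring,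
            Real.sqrt_sq (by positivity)]
  -- per-t estimate
  have est : ∀ t : EuclideanSpace ℝ (Fin d),
      |(∫ y, (Real.sqrt (p (x0 + t) y) - Real.sqrt (p x0 y)) ^ 2 ∂ν) -
          (1 / 4) * ∫ y, ((inner ℝ t (L y) : ℝ)) ^ 2 * p x0 y ∂ν| ≤
        f t + Real.sqrt C * (‖t‖ * Real.sqrt (f t)) := by
    intro t
    have hu : MemLp (fun y => Real.sqrt (p (x0 + t) y) - Real.sqrt (p x0 y)) 2 ν :=
      (hq2 (x0 + t)).sub (hq2 x0)
    have h : |(∫ y, (Real.sqrt (p (x0 + t) y) - Real.sqrt (p x0 y)) ^ 2 ∂ν) -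
        ∫ y, ((1 / 2) * (inner ℝ t (L y) : ℝ) * Real.sqrt (p x0 y)) ^ 2 ∂ν| ≤
        (∫ y, (Real.sqrt (p (x0 + t) y) - Real.sqrt (p x0 y) -
          (1 / 2) * (inner ℝ t (L y) : ℝ) * Real.sqrt (p x0 y)) ^ 2 ∂ν) +
        2 * (Real.sqrt (∫ y, (Real.sqrt (p (x0 + t) y) - Real.sqrt (p x0 y) -
            (1 / 2) * (inner ℝ t (L y) : ℝ) * Real.sqrt (p x0 y)) ^ 2 ∂ν) *
          Real.sqrt (∫ y, ((1 / 2) * (inner ℝ t (L y) : ℝ) * Real.sqrt (p x0 y)) ^ 2 ∂ν)) :=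
      key_est hu (hs2 t)
    rw [hs_sq_eq t, ← hft t] at h
    refine h.trans ?_
    have h2 := hs_sq_le t
    nlinarith [Real.sqrt_nonneg (f t),
      mul_le_mul_of_nonneg_left h2 (Real.sqrt_nonneg (f t))]
  -- asymptotics
  have hsqrt : (fun t : EuclideanSpace ℝ (Fin d) => Real.sqrt (f t)) =o[nhds 0] fun t => ‖t‖ := by
    rw [isLittleO_iff]
    intro c hc
    filter_upwards [hQMD.def (mul_pos hc hc)] with t ht
    rw [Real.norm_eq_abs, abs_of_nonneg (hf_nonneg t), Real.norm_eq_abs (‖t‖^2),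
      abs_of_nonneg (by positivity)] at ht
    calc ‖Real.sqrt (f t)‖ = Real.sqrt (f t) := by
          rw [Real.norm_eq_abs, abs_of_nonneg (Real.sqrt_nonneg _)]
      _ ≤ Real.sqrt ((c * ‖t‖) ^ 2) := Real.sqrt_le_sqrt (by nlinarith)
      _ = c * ‖t‖ := Real.sqrt_sq (by positivity)
      _ = c * ‖‖t‖‖ := by rw [norm_norm]
  have hmul : (fun t : EuclideanSpace ℝ (Fin d) => Real.sqrt C * (‖t‖ * Real.sqrt (f t))) =o[nhds 0]
      fun t : EuclideanSpace ℝ (Fin d) => ‖t‖ ^ 2 := by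
    have h1 : (fun t : EuclideanSpace ℝ (Fin d) => ‖t‖ * Real.sqrt (f t)) =o[nhds 0] fun t : EuclideanSpace ℝ (Fin d) => ‖t‖ * ‖t‖ :=
      (isBigO_refl (fun t : EuclideanSpace ℝ (Fin d) => ‖t‖) (nhds 0)).mul_isLittleO hsqrt
    have h2 := h1.const_mul_left (Real.sqrt C)
    rw [show (fun t : EuclideanSpace ℝ (Fin d) => ‖t‖ ^ 2) = fun t : EuclideanSpace ℝ (Fin d) => ‖t‖ * ‖t‖ from funext fun t => pow_two _]
    exact h2
  have hsum : (fun t : EuclideanSpace ℝ (Fin d) => f t + Real.sqrt C * (‖t‖ * Real.sqrt (f t))) =o[nhds 0]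
      fun t : EuclideanSpace ℝ (Fin d) => ‖t‖ ^ 2 := hQMD.add hmul
  have hG : (fun t : EuclideanSpace ℝ (Fin d) =>
      (∫ y, (Real.sqrt (p (x0 + t) y) - Real.sqrt (p x0 y)) ^ 2 ∂ν) -
        (1 / 4) * ∫ y, ((inner ℝ t (L y) : ℝ)) ^ 2 * p x0 y ∂ν) =o[nhds 0]
      fun t : EuclideanSpace ℝ (Fin d) => ‖t‖ ^ 2 := by
    refine (Asymptotics.isBigO_of_le (nhds 0) fun t => ?_).trans_isLittleO hsum
    rw [Real.norm_eq_abs, Real.norm_eq_abs,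
      abs_of_nonneg (add_nonneg (hf_nonneg t) (by positivity))]
    exact est t
  have htend : Tendsto (fun x : EuclideanSpace ℝ (Fin d) => x - x0) (nhds x0) (nhds 0) := by
    exact tendsto_sub_nhds_zero_iff.mpr tendsto_id
  have hcomp := hG.comp_tendsto htend
  refine hcomp.congr (fun x => ?_) (fun x => rfl)
  simp only [Function.comp]
  rw [show x0 + (x - x0) = x from by abel]
end

section
/- Define δ(u) := u/(1 - ln u) for u ∈ (0, e^{-2}) and δ(u) := 0 otherwise. For d ≥ 1, let X be uniform on the ball B_r̃ ⊂ ℝ^d centered at 0, and let Y given X = x take value e_1 with probability 1/2 + δ(‖x‖) and 0 with probability 1/2 − δ(‖x‖). Let P_r be the law of Y given ‖X‖ < r and P the law with P(Y = e_1) = 1/2. Then for all sufficiently small r > 0, TV(P_r, P) ≥ (d(1 − 2^{−d−1})/(d+1)) · r/(1 − ln(r/2)). Consequently, for every ε > 0 and C < ∞ the bound TV(P_r, P) ≤ C r^{1+ε} fails for all small r. -/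
open MeasureTheory

/-- Total variation distance between two measures: supremum over measurable sets of the
absolute difference of the measures. -/
noncomputable def tvDist {α : Type*} [MeasurableSpace α] (P Q : Measure α) : ℝ :=
  sSup {x | ∃ A : Set α, MeasurableSet A ∧ x = |(P A).toReal - (Q A).toReal|}

/-- `δ(u) = u/(1 - ln u)` for `u ∈ (0, e^{-2})`, and `0` otherwise. -/
noncomputable def deltaFn (u : ℝ) : ℝ :=
  if 0 < u ∧ u < Real.exp (-2) then u / (1 - Real.log u) else 0

/-- Probability that `Y = e_1` conditional on `‖X‖ < r`, when `X` is uniform on the ball of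
radius `rt` centered at the origin of `ℝ^d` and `P(Y = e_1 ∣ X = x) = 1/2 + δ(‖x‖)`. -/
noncomputable def piR (d : ℕ) (rt r : ℝ) : ℝ :=
  (∫ x in Metric.ball (0 : EuclideanSpace ℝ (Fin d)) r ∩ Metric.ball 0 rt,
      (1 / 2 + deltaFn ‖x‖)) /
    (volume (Metric.ball (0 : EuclideanSpace ℝ (Fin d)) r ∩ Metric.ball 0 rt)).toReal

/-- The conditional law of `Y` given `‖X‖ < r`: a two-point measure on `{0, e_1} ⊂ ℝ^m`. -/
noncomputable def PrLaw (m d : ℕ) [NeZero m] (rt r : ℝ) :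
    Measure (EuclideanSpace ℝ (Fin m)) :=
  ENNReal.ofReal (piR d rt r) • Measure.dirac (EuclideanSpace.single 0 (1 : ℝ)) +
    ENNReal.ofReal (1 - piR d rt r) • Measure.dirac 0

/-- The law `P` with `P(Y = e_1) = P(Y = 0) = 1/2`. -/
noncomputable def PLaw (m : ℕ) [NeZero m] : Measure (EuclideanSpace ℝ (Fin m)) :=
  (1 / 2 : ENNReal) • Measure.dirac (EuclideanSpace.single 0 (1 : ℝ)) +
    (1 / 2 : ENNReal) • Measure.dirac 0

open Metric Set

section Aux

lemma aux_log_lt_neg_two {u : ℝ} (h : 0 < u ∧ u < Real.exp (-2)) : Real.log u < -2 := by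
  have := Real.log_lt_log h.1 h.2
  simpa [Real.log_exp] using this

lemma deltaFn_nonneg (u : ℝ) : 0 ≤ deltaFn u := by
  unfold deltaFn
  split_ifs with h
  · have hlog := aux_log_lt_neg_two h
    have : (0:ℝ) < 1 - Real.log u := by linarith
    exact div_nonneg h.1.le this.le
  · exact le_refl _

lemma deltaFn_le_one (u : ℝ) : deltaFn u ≤ 1 := by
  unfold deltaFn
  split_ifs with h
  · have hlog := aux_log_lt_neg_two h
    have h1 : (1:ℝ) ≤ 1 - Real.log u := by linarith
    have := div_le_self h.1.le h1
    have hu1 : u ≤ 1 := by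
      have : Real.exp (-2) ≤ 1 := Real.exp_le_one_iff.mpr (by norm_num)
      linarith [h.2]
    linarith
  · norm_num

lemma measurable_deltaFn : Measurable deltaFn := by
  unfold deltaFn
  have : MeasurableSet {u : ℝ | 0 < u ∧ u < Real.exp (-2)} := by
    simpa [Set.Ioo] using measurableSet_Ioo (a := (0:ℝ)) (b := Real.exp (-2))
  exact Measurable.ite this (measurable_id.div (measurable_const.sub Real.measurable_log))
    measurable_const

lemma deltaFn_eq {u : ℝ} (h : 0 < u) (h2 : u < Real.exp (-2)) :
    deltaFn u = u / (1 - Real.log u) := if_pos ⟨h, h2⟩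

lemma mul_deltaFn_nonneg (k : ℕ) (y : ℝ) : 0 ≤ y ^ k * deltaFn y := by
  rcases le_or_gt 0 y with h | h
  · exact mul_nonneg (pow_nonneg h _) (deltaFn_nonneg y)
  · have : deltaFn y = 0 := by
      rw [deltaFn, if_neg]; rintro ⟨h1, -⟩; linarith
    simp [this]

lemma le_tvDist {α : Type*} [MeasurableSpace α] (P Q : Measure α)
    (hP : P univ ≠ ⊤) (hQ : Q univ ≠ ⊤) (A : Set α) (hA : MeasurableSet A) :
    |(P A).toReal - (Q A).toReal| ≤ tvDist P Q := by
  apply le_csSup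
  · refine ⟨(P univ).toReal + (Q univ).toReal, ?_⟩
    rintro x ⟨B, hB, rfl⟩
    have h1 : (P B).toReal ≤ (P univ).toReal :=
      ENNReal.toReal_mono hP (measure_mono (subset_univ B))
    have h2 : (Q B).toReal ≤ (Q univ).toReal :=
      ENNReal.toReal_mono hQ (measure_mono (subset_univ B))
    have h3 : (0:ℝ) ≤ (P B).toReal := ENNReal.toReal_nonneg
    have h4 : (0:ℝ) ≤ (Q B).toReal := ENNReal.toReal_nonneg
    rw [abs_sub_le_iff]
    constructor <;> nlinarith
  · exact ⟨A, hA, rfl⟩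

lemma e1_ne_zero (m : ℕ) [NeZero m] : (EuclideanSpace.single (0 : Fin m) (1:ℝ)) ≠ 0 := by
  intro h
  have h2 := congrArg norm h
  rw [EuclideanSpace.norm_single, norm_zero] at h2
  norm_num at h2

lemma PrLaw_e1 (m d : ℕ) [NeZero m] (rt r : ℝ) :
    PrLaw m d rt r {EuclideanSpace.single (0 : Fin m) (1:ℝ)} = ENNReal.ofReal (piR d rt r) := by
  simp [PrLaw, Measure.add_apply, Measure.smul_apply,
    Measure.dirac_apply' _ (measurableSet_singleton _),
    Set.indicator_apply, Set.mem_singleton_iff, Ne.symm (e1_ne_zero m)]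

lemma PLaw_e1 (m : ℕ) [NeZero m] :
    (PLaw m {EuclideanSpace.single (0 : Fin m) (1:ℝ)}).toReal = 1/2 := by
  simp [PLaw, Measure.add_apply, Measure.smul_apply,
    Measure.dirac_apply' _ (measurableSet_singleton _),
    Set.indicator_apply, Set.mem_singleton_iff, Ne.symm (e1_ne_zero m)]

lemma PrLaw_univ (m d : ℕ) [NeZero m] (rt r : ℝ) : PrLaw m d rt r univ ≠ ⊤ := by
  simp [PrLaw, Measure.add_apply]

lemma PLaw_univ (m : ℕ) [NeZero m] : PLaw m univ ≠ ⊤ := by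
  simp [PLaw, Measure.add_apply]

lemma piR_eq (d : ℕ) (rt r : ℝ) (h1 : 0 < r) (h2 : r ≤ rt) :
    piR d rt r = 1/2 + (∫ x in ball (0 : EuclideanSpace ℝ (Fin d)) r, deltaFn ‖x‖) /
      (volume (ball (0 : EuclideanSpace ℝ (Fin d)) r)).toReal := by
  have hinter : ball (0 : EuclideanSpace ℝ (Fin d)) r ∩ ball 0 rt = ball 0 r :=
    inter_eq_left.mpr (ball_subset_ball h2)
  have hVpos : 0 < (volume (ball (0 : EuclideanSpace ℝ (Fin d)) r)).toReal :=
    ENNReal.toReal_pos (measure_ball_pos volume _ h1).ne' measure_ball_lt_top.ne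
  have hintd : IntegrableOn (fun x : EuclideanSpace ℝ (Fin d) => deltaFn ‖x‖) (ball 0 r) := by
    apply Measure.integrableOn_of_bounded (M := 1) measure_ball_lt_top.ne
    · exact (measurable_deltaFn.comp measurable_norm).aestronglyMeasurable
    · filter_upwards with x
      rw [Real.norm_eq_abs, abs_of_nonneg (deltaFn_nonneg _)]
      exact deltaFn_le_one _
  have hsplit : (∫ x in ball (0 : EuclideanSpace ℝ (Fin d)) r, (1/2 + deltaFn ‖x‖)) =
      1/2 * (volume (ball (0 : EuclideanSpace ℝ (Fin d)) r)).toReal +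
        ∫ x in ball (0 : EuclideanSpace ℝ (Fin d)) r, deltaFn ‖x‖ := by
    rw [integral_add (integrableOn_const (C := (1/2 : ℝ)) measure_ball_lt_top.ne) hintd,
      setIntegral_const, smul_eq_mul, mul_comm, Measure.real]
  rw [piR, hinter, hsplit, add_div, mul_div_assoc, div_self hVpos.ne', mul_one]

lemma piR_half_le (d : ℕ) (rt r : ℝ) (h1 : 0 < r) (h2 : r ≤ rt) : 1/2 ≤ piR d rt r := by
  rw [piR_eq d rt r h1 h2]
  have : 0 ≤ (∫ x in ball (0 : EuclideanSpace ℝ (Fin d)) r, deltaFn ‖x‖) /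
      (volume (ball (0 : EuclideanSpace ℝ (Fin d)) r)).toReal := by
    apply div_nonneg _ ENNReal.toReal_nonneg
    exact setIntegral_nonneg measurableSet_ball fun x _ => deltaFn_nonneg _
  linarith

lemma key (d : ℕ) [NeZero d] (r : ℝ) (h1 : 0 < r) (h2 : r < Real.exp (-2)) :
    (d:ℝ) * (1 - (2:ℝ) ^ (-(d:ℝ) - 1)) / ((d:ℝ) + 1) * (r / (1 - Real.log (r/2))) ≤
      (∫ x in ball (0 : EuclideanSpace ℝ (Fin d)) r, deltaFn ‖x‖) /
        (volume (ball (0 : EuclideanSpace ℝ (Fin d)) r)).toReal := by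
  haveI : Nontrivial (EuclideanSpace ℝ (Fin d)) := by
    refine ⟨EuclideanSpace.single (0 : Fin d) (1:ℝ), 0, fun h => ?_⟩
    have h2 := congrArg norm h
    rw [EuclideanSpace.norm_single, norm_zero] at h2
    norm_num at h2
  set E := EuclideanSpace ℝ (Fin d)
  have hdim : Module.finrank ℝ E = d := finrank_euclideanSpace_fin
  have hd1 : 1 ≤ d := Nat.one_le_iff_ne_zero.mpr (NeZero.ne d)
  have hre : Real.exp (-2) < 1 := Real.exp_lt_one_iff.mpr (by norm_num)
  have hr1 : r < 1 := h2.trans hre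
  set c := 1 - Real.log (r/2) with hc_def
  have hlog : Real.log (r/2) < -2 := by
    have : Real.log (r/2) < Real.log (Real.exp (-2)) :=
      Real.log_lt_log (by linarith) (by linarith)
    simpa [Real.log_exp] using this
  have hc : (0:ℝ) < c := by simp only [hc_def]; linarith
  set V1 := (volume (ball (0 : E) 1)).toReal with hV1_def
  have hV1 : 0 < V1 := by
    apply ENNReal.toReal_pos (measure_ball_pos volume _ one_pos).ne' measure_ball_lt_top.ne
  have hV : (volume (ball (0 : E) r)).toReal = r ^ d * V1 := by
    rw [Measure.addHaar_ball _ _ h1.le, hdim, ENNReal.toReal_mul, ENNReal.toReal_ofReal]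
    positivity
  set J := ∫ y in Ioo (0:ℝ) r, y ^ (d-1) * deltaFn y with hJ_def
  have hI : (∫ x in ball (0 : E) r, deltaFn ‖x‖) = d * V1 * J := by
    have e1 : (∫ x in ball (0 : E) r, deltaFn ‖x‖) =
        ∫ x : E, ((Iio r).indicator deltaFn) ‖x‖ := by
      rw [← integral_indicator measurableSet_ball]
      congr 1
      funext x
      by_cases hx : ‖x‖ < r <;>
        simp [Set.indicator_apply, mem_ball_zero_iff, hx]
    rw [e1, integral_fun_norm_addHaar volume ((Iio r).indicator deltaFn), hdim]
    have e2 : (∫ y in Ioi (0:ℝ), y ^ (d-1) • (Iio r).indicator deltaFn y) = J := by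
      have : (fun y : ℝ => y ^ (d-1) • (Iio r).indicator deltaFn y) =
          fun y => (Iio r).indicator (fun y => y ^ (d-1) * deltaFn y) y := by
        funext y
        by_cases hy : y < r <;> simp [Set.indicator_apply, hy]
      rw [this, setIntegral_indicator measurableSet_Iio, hJ_def, Ioi_inter_Iio]
    rw [e2, nsmul_eq_mul, smul_eq_mul, show (volume.real (ball (0:E) 1)) = V1 from rfl]; ring
  have hint : IntegrableOn (fun y : ℝ => y ^ (d-1) * deltaFn y) (Ioo 0 r) := by
    apply Measure.integrableOn_of_bounded (M := r ^ (d-1)) measure_Ioo_lt_top.ne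
    · exact ((measurable_id.pow_const (d-1)).mul measurable_deltaFn).aestronglyMeasurable
    · rw [ae_restrict_iff' measurableSet_Ioo]
      filter_upwards with y hy
      rw [Real.norm_eq_abs, abs_of_nonneg (mul_deltaFn_nonneg _ y)]
      calc y ^ (d-1) * deltaFn y ≤ r ^ (d-1) * 1 :=
            mul_le_mul (pow_le_pow_left₀ hy.1.le hy.2.le _) (deltaFn_le_one y)
              (deltaFn_nonneg y) (by positivity)
        _ = r ^ (d-1) := mul_one _
  have hint2 : IntegrableOn (fun y : ℝ => y ^ d / c) (Ioo (r/2) r) := by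
    apply Measure.integrableOn_of_bounded (M := r ^ d / c) measure_Ioo_lt_top.ne
    · exact ((measurable_id.pow_const d).div_const c).aestronglyMeasurable
    · rw [ae_restrict_iff' measurableSet_Ioo]
      filter_upwards with y hy
      have hy0 : 0 ≤ y := by linarith [hy.1]
      rw [Real.norm_eq_abs, abs_of_nonneg (by positivity)]
      exact div_le_div_of_nonneg_right (pow_le_pow_left₀ hy0 hy.2.le _) hc.le
  have hJ1 : (∫ y in Ioo (r/2) r, y ^ (d-1) * deltaFn y) ≤ J := by
    apply setIntegral_mono_set hint
    · filter_upwards with y using mul_deltaFn_nonneg _ y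
    · exact (Ioo_subset_Ioo_left (by linarith)).eventuallyLE
  have hJ2 : (∫ y in Ioo (r/2) r, y ^ d / c) ≤ ∫ y in Ioo (r/2) r, y ^ (d-1) * deltaFn y := by
    apply setIntegral_mono_on hint2 (hint.mono_set (Ioo_subset_Ioo_left (by linarith)))
      measurableSet_Ioo
    intro y hy
    have hy0 : 0 < y := by linarith [hy.1]
    have hyr : y < Real.exp (-2) := hy.2.trans h2
    rw [deltaFn_eq hy0 hyr]
    have hly : 1 - Real.log y ≤ c := by
      have := Real.log_le_log (by linarith) (le_of_lt hy.1)
      simp only [hc_def]; linarith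
    have hcy : (0:ℝ) < 1 - Real.log y := by
      have : Real.log y < -2 := by
        have := Real.log_lt_log hy0 hyr
        simpa [Real.log_exp] using this
      linarith
    have : y ^ (d-1) * (y / (1 - Real.log y)) = y ^ d / (1 - Real.log y) := by
      rw [mul_div_assoc', ← pow_succ, Nat.sub_add_cancel hd1]
    rw [this]
    exact div_le_div_of_nonneg_left (by positivity) hcy hly
  have hpow : (∫ y in Ioo (r/2) r, (y:ℝ) ^ d) = (r^(d+1) - (r/2)^(d+1)) / ((d:ℝ)+1) := by
    rw [← integral_Ioc_eq_integral_Ioo, ← intervalIntegral.integral_of_le (by linarith)]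
    simpa using integral_pow (a := r/2) (b := r) (n := d)
  have hJ3 : (r^(d+1) - (r/2)^(d+1)) / (((d:ℝ)+1) * c) ≤ J := by
    have : (∫ y in Ioo (r/2) r, y ^ d / c) = (r^(d+1) - (r/2)^(d+1)) / (((d:ℝ)+1) * c) := by
      rw [integral_div, hpow, div_div]
    linarith [hJ1, hJ2, this ▸ hJ2]
  rw [hI, hV, le_div_iff₀ (by positivity)]
  have h2pow : (2:ℝ) ^ (-(d:ℝ) - 1) = ((2:ℝ) ^ (d+1 : ℕ))⁻¹ := by
    rw [show (-(d:ℝ) - 1) = -((d+1 : ℕ) : ℝ) by push_cast; ring,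
      Real.rpow_neg (by norm_num), Real.rpow_natCast]
  have hstep : (d:ℝ) * (1 - (2:ℝ) ^ (-(d:ℝ) - 1)) / ((d:ℝ) + 1) * (r / c) * (r ^ d * V1) =
      (d:ℝ) * V1 * ((r^(d+1) - (r/2)^(d+1)) / (((d:ℝ)+1) * c)) := by
    rw [h2pow, div_pow]
    have hd0 : ((d:ℝ)+1) ≠ 0 := by positivity
    have h20 : ((2:ℝ) ^ (d+1 : ℕ)) ≠ 0 := by positivity
    field_simp
    ring
  rw [hstep]
  have hdV : (0:ℝ) ≤ (d:ℝ) * V1 := by positivity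
  calc (d:ℝ) * V1 * ((r^(d+1) - (r/2)^(d+1)) / (((d:ℝ)+1) * c)) ≤ (d:ℝ) * V1 * J :=
        mul_le_mul_of_nonneg_left hJ3 hdV
    _ = _ := by ring

lemma tv_lower (d m : ℕ) [NeZero d] [NeZero m] (rt : ℝ) (r : ℝ)
    (h1 : 0 < r) (h2 : r < Real.exp (-2)) (h3 : r ≤ rt) :
    (d:ℝ) * (1 - (2:ℝ) ^ (-(d:ℝ) - 1)) / ((d:ℝ) + 1) * (r / (1 - Real.log (r/2))) ≤
      tvDist (PrLaw m d rt r) (PLaw m) := by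
  have hhalf := piR_half_le d rt r h1 h3
  have htv := le_tvDist (PrLaw m d rt r) (PLaw m) (PrLaw_univ m d rt r) (PLaw_univ m)
    {EuclideanSpace.single (0 : Fin m) (1:ℝ)} (measurableSet_singleton _)
  rw [PrLaw_e1, PLaw_e1, ENNReal.toReal_ofReal (by linarith)] at htv
  have habs : piR d rt r - 1/2 ≤ |piR d rt r - 1/2| := le_abs_self _
  have hpi := piR_eq d rt r h1 h3
  have hk := key d r h1 h2
  calc (d:ℝ) * (1 - (2:ℝ) ^ (-(d:ℝ) - 1)) / ((d:ℝ) + 1) * (r / (1 - Real.log (r/2)))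
      ≤ piR d rt r - 1/2 := by rw [hpi]; linarith [hk]
    _ ≤ |piR d rt r - 1/2| := habs
    _ ≤ tvDist (PrLaw m d rt r) (PLaw m) := htv

end Aux

theorem stmt_16 (d m : ℕ) [NeZero d] [NeZero m] (rt : ℝ) (hrt : 0 < rt) :
    (∃ r0 > (0 : ℝ), ∀ r : ℝ, 0 < r → r < r0 →
        ((d : ℝ) * (1 - (2 : ℝ) ^ (-(d : ℝ) - 1)) / ((d : ℝ) + 1)) *
            (r / (1 - Real.log (r / 2))) ≤
          tvDist (PrLaw m d rt r) (PLaw m)) ∧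
      ∀ ε > (0 : ℝ), ∀ C : ℝ,
        ¬ ∃ rbar > (0 : ℝ), ∀ r : ℝ, 0 < r → r < rbar →
            tvDist (PrLaw m d rt r) (PLaw m) ≤ C * r ^ (1 + ε) := by
  set K := (d : ℝ) * (1 - (2 : ℝ) ^ (-(d : ℝ) - 1)) / ((d : ℝ) + 1) with hK_def
  have hdpos : (0:ℝ) < d := Nat.cast_pos.mpr (Nat.pos_of_ne_zero (NeZero.ne d))
  have hKpos : 0 < K := by
    have h1 : (2:ℝ) ^ (-(d:ℝ) - 1) < 1 :=
      Real.rpow_lt_one_of_one_lt_of_neg one_lt_two (by linarith)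
    have h2 : (0:ℝ) < (d:ℝ) + 1 := by linarith
    rw [hK_def]
    exact div_pos (mul_pos hdpos (by linarith)) (by linarith)
  set r0 := min rt (Real.exp (-2)) with hr0_def
  have hr0pos : 0 < r0 := lt_min hrt (Real.exp_pos _)
  have hmain : ∀ r : ℝ, 0 < r → r < r0 → K * (r / (1 - Real.log (r / 2))) ≤
      tvDist (PrLaw m d rt r) (PLaw m) := by
    intro r hr hrr0
    exact tv_lower d m rt r hr (hrr0.trans_le (min_le_right _ _))
      ((hrr0.trans_le (min_le_left _ _)).le)
  refine ⟨⟨r0, hr0pos, hmain⟩, ?_⟩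
  rintro ε hε C ⟨rbar, hrbar, hub⟩
  have hlim : Filter.Tendsto (fun r : ℝ => C * (r ^ ε - Real.log r * r ^ ε + Real.log 2 * r ^ ε))
      (nhdsWithin 0 (Set.Ioi 0)) (nhds 0) := by
    have t1 : Filter.Tendsto (fun r : ℝ => r ^ ε) (nhdsWithin 0 (Set.Ioi 0)) (nhds 0) := by
      have h := (Real.continuousAt_rpow_const 0 ε (Or.inr hε.le)).tendsto
      rw [Real.zero_rpow hε.ne'] at h
      exact h.mono_left nhdsWithin_le_nhds
    have t2 : Filter.Tendsto (fun r : ℝ => Real.log r * r ^ ε)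
        (nhdsWithin 0 (Set.Ioi 0)) (nhds 0) := tendsto_log_mul_rpow_nhdsGT_zero hε
    have h3 := ((t1.sub t2).add (t1.const_mul (Real.log 2))).const_mul C
    simpa using h3
  have hev1 : ∀ᶠ r in nhdsWithin 0 (Set.Ioi 0),
      C * (r ^ ε - Real.log r * r ^ ε + Real.log 2 * r ^ ε) < K :=
    hlim.eventually_lt_const hKpos
  have hev2 : ∀ᶠ r in nhdsWithin 0 (Set.Ioi 0),
      r ∈ Ioo (0:ℝ) (min (min r0 rbar) 1) := by
    apply Ioo_mem_nhdsGT_of_mem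
    exact ⟨le_refl _, lt_min (lt_min hr0pos hrbar) one_pos⟩
  obtain ⟨r, hlt, hmem⟩ := (hev1.and hev2).exists
  obtain ⟨hr, hrlt⟩ := hmem
  have hrr0 : r < r0 := hrlt.trans_le ((min_le_left _ _).trans (min_le_left _ _))
  have hrrbar : r < rbar := hrlt.trans_le ((min_le_left _ _).trans (min_le_right _ _))
  have hr1 : r < 1 := hrlt.trans_le (min_le_right _ _)
  set c := 1 - Real.log (r/2) with hc_def
  have hc : (0:ℝ) < c := by
    have : Real.log (r/2) < 0 := Real.log_neg (by linarith) (by linarith)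
    simp only [hc_def]; linarith
  have hlb := hmain r hr hrr0
  have hub' := hub r hr hrrbar
  have hrpow : r ^ (1 + ε) = r * r ^ ε := by
    rw [Real.rpow_add hr, Real.rpow_one]
  have hlogdiv : Real.log (r/2) = Real.log r - Real.log 2 := Real.log_div hr.ne' two_ne_zero
  have hlt' : C * (r ^ ε * c) < K := by
    have : r ^ ε * c = r ^ ε - Real.log r * r ^ ε + Real.log 2 * r ^ ε := by
      rw [hc_def, hlogdiv]; ring
    rw [this]; exact hlt
  -- K * (r / c) ≤ C * (r * r ^ ε)
  have hchain : K * (r / c) ≤ C * (r * r ^ ε) := by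
    calc K * (r / c) ≤ tvDist (PrLaw m d rt r) (PLaw m) := hlb
      _ ≤ C * r ^ (1 + ε) := hub'
      _ = C * (r * r ^ ε) := by rw [hrpow]
  have e1 : K * r ≤ C * (r * r ^ ε) * c := by
    rw [mul_div_assoc'] at hchain
    exact (div_le_iff₀ hc).mp hchain
  have e2 : C * (r ^ ε * c) * r < K * r := mul_lt_mul_of_pos_right hlt' hr
  have e3 : C * (r * r ^ ε) * c = C * (r ^ ε * c) * r := by ring
  linarith
end
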